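/- Let h: ℝ → ℝ be continuously differentiable with h(0) = 0, h'(0) > 0, and h(t) ≠ 0 for all t ≠ 0 in [−ε, ε] with ε > 0. Then lim_{α→∞} ∫_{−ε}^{ε} (α/2)·exp(−α·|h(t)|) dt = 1 / h'(0). -/

import Mathlib

set_option maxHeartbeats 1000000

open Filter MeasureTheory Real

lemma key_int (k r α : ℝ) (hk : 0 < k) (hr : 0 < r) (hα : 0 < α) :
    ∫ t in Set.Icc (-r) r, α / 2 * Real.exp (-(α * k) * |t|)
      = (1 - Real.exp (-(α * k) * r)) / k := by
  have hcont : Continuous fun t : ℝ => α / 2 * Real.exp (-(α * k) * |t|) :=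
    continuous_const.mul (Real.continuous_exp.comp (continuous_const.mul continuous_abs))
  rw [MeasureTheory.integral_Icc_eq_integral_Ioc,
      ← intervalIntegral.integral_of_le (by linarith : -r ≤ r)]
  have hsplit := intervalIntegral.integral_add_adjacent_intervals
    (μ := volume) (a := -r) (b := 0) (c := r) (f := fun t => α / 2 * Real.exp (-(α * k) * |t|))
    (hcont.intervalIntegrable (-r) 0) (hcont.intervalIntegrable 0 r)
  rw [← hsplit]
  have hneg : (∫ t in (-r : ℝ)..0, α / 2 * Real.exp (-(α * k) * |t|))
      = ∫ t in (0:ℝ)..r, α / 2 * Real.exp (-(α * k) * |t|) := by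
    have := intervalIntegral.integral_comp_neg (a := 0) (b := r)
      (fun t => α / 2 * Real.exp (-(α * k) * |t|))
    simp only [abs_neg, neg_zero] at this
    exact this.symm
  rw [hneg]
  have habs : (∫ t in (0:ℝ)..r, α / 2 * Real.exp (-(α * k) * |t|))
      = ∫ t in (0:ℝ)..r, α / 2 * Real.exp (-(α * k) * t) := by
    apply intervalIntegral.integral_congr
    intro t ht
    rw [Set.uIcc_of_le hr.le] at ht
    simp [abs_of_nonneg ht.1]
  rw [habs]
  have hb : -(α * k) ≠ 0 := by nlinarith
  have : (∫ t in (0:ℝ)..r, α / 2 * Real.exp (-(α * k) * t))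
      = α / 2 * ((-(α*k))⁻¹ * (Real.exp (-(α*k)*r) - Real.exp (-(α*k)*0))) := by
    rw [intervalIntegral.integral_const_mul,
      intervalIntegral.integral_comp_mul_left Real.exp hb, smul_eq_mul,
      integral_exp]
  rw [this, mul_zero, Real.exp_zero]
  field_simp
  ring

theorem delta_composition_one_dim (h : ℝ → ℝ) (ε : ℝ) (hε : 0 < ε)
    (hC1 : ContDiff ℝ 1 h) (h0 : h 0 = 0) (hd : 0 < deriv h 0)
    (hne : ∀ t ∈ Set.Icc (-ε) ε, t ≠ 0 → h t ≠ 0) :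
    Tendsto (fun α : ℝ => ∫ t in Set.Icc (-ε) ε, α / 2 * Real.exp (-α * |h t|))
      atTop (nhds (1 / deriv h 0)) := by
  set c := deriv h 0 with hcdef
  have hcont_h : Continuous h := hC1.continuous
  have hcontf : ∀ α : ℝ, Continuous fun t => α / 2 * Real.exp (-α * |h t|) := fun α =>
    continuous_const.mul (Real.continuous_exp.comp (continuous_const.mul hcont_h.abs))
  rw [Metric.tendsto_nhds]
  intro δ hδ
  -- choose η
  set η := min (c / 2) (δ * c ^ 2 / 8) with hηdef
  have hη0 : 0 < η := lt_min (by linarith) (by positivity)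
  have hηc : η ≤ c / 2 := min_le_left _ _
  have hη2 : η ≤ δ * c ^ 2 / 8 := min_le_right _ _
  have hcη : 0 < c - η := by linarith
  have hcη' : 0 < c + η := by linarith
  -- choose r via continuity of deriv h at 0
  have hcd : Continuous (deriv h) := hC1.continuous_deriv le_rfl
  obtain ⟨r', hr'0, hr'⟩ := Metric.continuousAt_iff.mp hcd.continuousAt η hη0
  set r := min (r' / 2) ε with hrdef
  have hr0 : 0 < r := lt_min (by linarith) hε
  have hrε : r ≤ ε := min_le_right _ _
  have hderiv_close : ∀ t : ℝ, |t| ≤ r → |deriv h t - c| ≤ η := by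
    intro t ht
    have : dist t 0 < r' := by
      rw [Real.dist_eq, sub_zero]
      calc |t| ≤ r := ht
        _ ≤ r' / 2 := min_le_left _ _
        _ < r' := by linarith
    have := hr' this
    rw [Real.dist_eq] at this
    exact this.le
  -- MVT bound : |h t - c * t| ≤ η * |t| for |t| ≤ r
  have hdiff : ∀ x : ℝ, DifferentiableAt ℝ h x := fun x =>
    (hC1.differentiable one_ne_zero).differentiableAt
  have hMVT : ∀ t ∈ Set.Icc (-r) r, |h t - c * t| ≤ η * |t| := by
    intro t ht
    have key := Convex.norm_image_sub_le_of_norm_deriv_le (𝕜 := ℝ)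
      (f := fun x => h x - c * x) (s := Set.Icc (-r) r) (C := η)
      (fun x _ => (hdiff x).sub (by fun_prop))
      (fun x hx => by
        have h2 : HasDerivAt (fun y : ℝ => c * y) c x := by
          simpa using (hasDerivAt_id x).const_mul c
        have hdx : deriv (fun y => h y - c * y) x = deriv h x - c :=
          (((hdiff x).hasDerivAt).sub h2).deriv
        rw [Real.norm_eq_abs, hdx]
        apply hderiv_close
        rw [abs_le]; exact ⟨hx.1, hx.2⟩)
      (convex_Icc _ _) (Set.mem_Icc.mpr ⟨by linarith, hr0.le⟩) ht
    simpa [h0, Real.norm_eq_abs] using key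
  have hlb : ∀ t ∈ Set.Icc (-r) r, (c - η) * |t| ≤ |h t| := by
    intro t ht
    have h1 : |c * t| - |h t| ≤ |c * t - h t| := abs_sub_abs_le_abs_sub _ _
    rw [abs_sub_comm] at h1
    have h2 := hMVT t ht
    have h3 : |c * t| = c * |t| := by rw [abs_mul, abs_of_pos hd]
    nlinarith [abs_nonneg t]
  have hub : ∀ t ∈ Set.Icc (-r) r, |h t| ≤ (c + η) * |t| := by
    intro t ht
    have h1 : |h t| - |c * t| ≤ |h t - c * t| := abs_sub_abs_le_abs_sub _ _
    have h2 := hMVT t ht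
    have h3 : |c * t| = c * |t| := by rw [abs_mul, abs_of_pos hd]
    nlinarith [abs_nonneg t]
  -- minimum of |h| on outer region
  set K' := Set.Icc (-ε) ε ∩ {t : ℝ | r ≤ |t|} with hK'def
  have hK'comp : IsCompact K' :=
    isCompact_Icc.inter_right (isClosed_le continuous_const continuous_abs)
  have hK'ne : K'.Nonempty := ⟨ε, ⟨by constructor <;> linarith, by
    simp only [Set.mem_setOf_eq, abs_of_pos hε]; exact hrε⟩⟩
  obtain ⟨t0, ht0, hmin⟩ := hK'comp.exists_isMinOn hK'ne (hcont_h.abs.continuousOn)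
  set m := |h t0| with hmdef
  have hm0 : 0 < m := by
    apply abs_pos.mpr
    apply hne t0 ht0.1
    intro ht00
    have := ht0.2
    simp only [Set.mem_setOf_eq, ht00, abs_zero] at this
    linarith
  -- eventually statements
  have ev1 : ∀ᶠ α : ℝ in atTop, 0 < α := eventually_gt_atTop 0
  have tail0 : Tendsto (fun α : ℝ => α * ε * Real.exp (-α * m)) atTop (nhds 0) := by
    have base := tendsto_pow_mul_exp_neg_atTop_nhds_zero 1
    have comp := base.comp ((tendsto_id.const_mul_atTop hm0) :
      Tendsto (fun α : ℝ => m * α) atTop atTop)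
    have := comp.const_mul (ε / m)
    rw [mul_zero] at this
    apply this.congr
    intro α
    simp only [Function.comp_apply, pow_one]
    field_simp
  have ev2 : ∀ᶠ α : ℝ in atTop, α * ε * Real.exp (-α * m) < δ / 4 :=
    tail0.eventually_lt_const (by linarith)
  have exp0 : Tendsto (fun α : ℝ => Real.exp (-(α * (c + η)) * r)) atTop (nhds 0) := by
    have comp := tendsto_exp_neg_atTop_nhds_zero.comp
      ((tendsto_id.const_mul_atTop (by positivity : 0 < (c + η) * r)) :
        Tendsto (fun α : ℝ => (c + η) * r * α) atTop atTop)
    apply comp.congr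
    intro α
    simp only [Function.comp_apply]
    ring_nf
  have ev3 : ∀ᶠ α : ℝ in atTop, Real.exp (-(α * (c + η)) * r) < δ / 4 * c :=
    exp0.eventually_lt_const (by positivity)
  filter_upwards [ev1, ev2, ev3] with α hα0 hα2 hα3
  rw [Real.dist_eq]
  -- split the integral
  have hsub : Set.Icc (-r) r ⊆ Set.Icc (-ε) ε := Set.Icc_subset_Icc (by linarith) hrε
  have hint : IntegrableOn (fun t => α / 2 * Real.exp (-α * |h t|)) (Set.Icc (-ε) ε) :=
    (hcontf α).integrableOn_Icc
  have hint_r : IntegrableOn (fun t => α / 2 * Real.exp (-α * |h t|)) (Set.Icc (-r) r) :=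
    (hcontf α).integrableOn_Icc
  have hint_d : IntegrableOn (fun t => α / 2 * Real.exp (-α * |h t|))
      (Set.Icc (-ε) ε \ Set.Icc (-r) r) := hint.mono_set Set.diff_subset
  have hsplit : (∫ t in Set.Icc (-ε) ε, α / 2 * Real.exp (-α * |h t|))
      = (∫ t in Set.Icc (-r) r, α / 2 * Real.exp (-α * |h t|))
        + ∫ t in Set.Icc (-ε) ε \ Set.Icc (-r) r, α / 2 * Real.exp (-α * |h t|) := by
    rw [← MeasureTheory.setIntegral_union disjoint_sdiff_self_right
      (measurableSet_Icc.diff measurableSet_Icc) hint_r hint_d,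
      Set.union_diff_cancel hsub]
  -- tail bound
  set T := ∫ t in Set.Icc (-ε) ε \ Set.Icc (-r) r, α / 2 * Real.exp (-α * |h t|) with hTdef
  have hTbound : |T| ≤ α * ε * Real.exp (-α * m) := by
    have hμ : volume (Set.Icc (-ε) ε \ Set.Icc (-r) r) < ⊤ :=
      lt_of_le_of_lt (measure_mono Set.diff_subset)
        (by rw [Real.volume_Icc]; exact ENNReal.ofReal_lt_top)
    have hptw : ∀ t ∈ Set.Icc (-ε) ε \ Set.Icc (-r) r,
        ‖α / 2 * Real.exp (-α * |h t|)‖ ≤ α / 2 * Real.exp (-α * m) := by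
      intro t ⟨ht1, ht2⟩
      have htK' : t ∈ K' := by
        refine ⟨ht1, ?_⟩
        simp only [Set.mem_setOf_eq]
        rw [Set.mem_Icc, not_and_or, not_le, not_le] at ht2
        rcases ht2 with h' | h'
        · rw [abs_of_neg (by linarith)]; linarith
        · rw [abs_of_pos (by linarith)]; linarith
      have hm_le : m ≤ |h t| := hmin htK'
      rw [Real.norm_eq_abs, abs_of_nonneg (by positivity)]
      have : Real.exp (-α * |h t|) ≤ Real.exp (-α * m) := by
        apply Real.exp_le_exp.mpr
        nlinarith
      nlinarith
    have key := MeasureTheory.norm_setIntegral_le_of_norm_le_const hμ hptw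
    rw [Real.norm_eq_abs] at key
    have hvol : (volume (Set.Icc (-ε) ε \ Set.Icc (-r) r)).toReal ≤ 2 * ε := by
      have h1 : volume (Set.Icc (-ε) ε \ Set.Icc (-r) r) ≤ volume (Set.Icc (-ε) ε) :=
        measure_mono Set.diff_subset
      have h2 : (volume (Set.Icc (-ε) ε)).toReal = 2 * ε := by
        rw [Real.volume_Icc, ENNReal.toReal_ofReal (by linarith)]; ring
      calc (volume (Set.Icc (-ε) ε \ Set.Icc (-r) r)).toReal
          ≤ (volume (Set.Icc (-ε) ε)).toReal :=
            ENNReal.toReal_mono (by rw [Real.volume_Icc]; exact ENNReal.ofReal_ne_top) h1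
        _ = 2 * ε := h2
    calc |T| ≤ α / 2 * Real.exp (-α * m)
          * (volume (Set.Icc (-ε) ε \ Set.Icc (-r) r)).toReal := key
      _ ≤ α / 2 * Real.exp (-α * m) * (2 * ε) := by
          apply mul_le_mul_of_nonneg_left hvol (by positivity)
      _ = α * ε * Real.exp (-α * m) := by ring
  -- main bounds
  set Ir := ∫ t in Set.Icc (-r) r, α / 2 * Real.exp (-α * |h t|) with hIrdef
  have hub_int : Ir ≤ 1 / (c - η) + δ / 4 := by
    have hcomp : Ir ≤ ∫ t in Set.Icc (-r) r, α / 2 * Real.exp (-(α * (c - η)) * |t|) := by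
      apply MeasureTheory.setIntegral_mono_on hint_r
        (Continuous.integrableOn_Icc (continuous_const.mul
          (Real.continuous_exp.comp (continuous_const.mul continuous_abs))))
        measurableSet_Icc
      intro t ht
      have hlbt := hlb t ht
      have hexp : Real.exp (-α * |h t|) ≤ Real.exp (-(α * (c - η)) * |t|) :=
        Real.exp_le_exp.mpr (by nlinarith)
      exact mul_le_mul_of_nonneg_left hexp (by positivity)
    rw [key_int (c - η) r α hcη hr0 hα0] at hcomp
    have : (1 - Real.exp (-(α * (c - η)) * r)) / (c - η) ≤ 1 / (c - η) := by
      rw [div_le_div_iff₀ hcη hcη]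
      nlinarith [Real.exp_pos (-(α * (c - η)) * r)]
    linarith
  have hlb_int : 1 / (c + η) - δ / 4 ≤ Ir := by
    have hcomp : (∫ t in Set.Icc (-r) r, α / 2 * Real.exp (-(α * (c + η)) * |t|)) ≤ Ir := by
      apply MeasureTheory.setIntegral_mono_on
        (Continuous.integrableOn_Icc (continuous_const.mul
          (Real.continuous_exp.comp (continuous_const.mul continuous_abs))))
        hint_r measurableSet_Icc
      intro t ht
      have hubt := hub t ht
      have hexp : Real.exp (-(α * (c + η)) * |t|) ≤ Real.exp (-α * |h t|) :=
        Real.exp_le_exp.mpr (by nlinarith)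
      exact mul_le_mul_of_nonneg_left hexp (by positivity)
    rw [key_int (c + η) r α hcη' hr0 hα0] at hcomp
    have hexp : Real.exp (-(α * (c + η)) * r) / (c + η) ≤ δ / 4 := by
      rw [div_le_iff₀ hcη']
      have : δ / 4 * c ≤ δ / 4 * (c + η) := by nlinarith
      linarith
    have : (1 - Real.exp (-(α * (c + η)) * r)) / (c + η)
        = 1 / (c + η) - Real.exp (-(α * (c + η)) * r) / (c + η) := by ring
    linarith [hcomp, this ▸ hcomp]
  -- compare 1/(c±η) with 1/c
  have hcmp1 : 1 / (c - η) ≤ 1 / c + δ / 4 := by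
    rw [div_le_iff₀ hcη]
    have key : η * 4 ≤ δ * c * (c - η) := by nlinarith
    have : (1 / c + δ / 4) * (c - η) = (c - η) / c + δ / 4 * (c - η) := by ring
    rw [this]
    have h1 : (c - η) / c = 1 - η / c := by field_simp
    rw [h1]
    have h2 : η / c ≤ δ / 4 * (c - η) := by
      rw [div_le_iff₀ hd]
      nlinarith
    linarith
  have hcmp2 : 1 / c - δ / 4 ≤ 1 / (c + η) := by
    rw [le_div_iff₀ hcη']
    have : (1 / c - δ / 4) * (c + η) = (c + η) / c - δ / 4 * (c + η) := by ring
    rw [this]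
    have h1 : (c + η) / c = 1 + η / c := by field_simp
    rw [h1]
    have h2 : η / c ≤ δ / 4 * (c + η) := by
      rw [div_le_iff₀ hd]
      nlinarith
    linarith
  -- conclude
  rw [hsplit]
  have hT1 : -(δ/4) < T := by
    have := abs_le.mp hTbound
    linarith [this.1]
  have hT2 : T < δ/4 := by
    have := abs_le.mp hTbound
    linarith [this.2]
  rw [abs_lt]
  constructor <;> [skip; skip] <;> nlinarith [hub_int, hlb_int, hcmp1, hcmp2, hT1, hT2]
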